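/- Let T be a finite family of pairwise disjoint non-vertical triangles in ℝ³ with edge set E, let Δ be a nonempty open convex subset of ℝ² containing no vertical projection of a vertex of any triangle of T, let C_Δ = Δ × ℝ, and let T_Δ = { T ∩ C_Δ : T ∈ T, T ∩ C_Δ ≠ ∅ }. Let P_0 ≺ P_1 ≺ … ≺ P_{k−1} ≺ P_0 (indices mod k, k ≥ 3, the P_i distinct) be a minimal cycle in T_Δ, i.e., no proper nonempty subfamily of {P_0, …, P_{k−1}} carries a cycle of the relation ≺. Then there exists a witness curve for this cycle all of whose links are good: there are points a_i, b_i ∈ P_i (indices mod k) such that π(b_i) = π(a_{i+1}), the z-coordinate of b_i is strictly smaller than that of a_{i+1}, and for each i the two points a_i and b_i lie on a common set e ∩ C_Δ where e ∈ E is an edge of the triangle of T whose piece is P_i. -/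

import Mathlib

noncomputable section

/-- Points of `ℝ³`, modeled as `ℝ × ℝ × ℝ`. -/
abbrev R3 : Type := ℝ × ℝ × ℝ

/-- Points of `ℝ²`, modeled as `ℝ × ℝ`. -/
abbrev R2 : Type := ℝ × ℝ

/-- The vertical projection `π : ℝ³ → ℝ²`, `(x,y,z) ↦ (x,y)`. -/
def vproj (p : R3) : R2 := (p.1, p.2.1)

/-- The `z`-coordinate of a point of `ℝ³`. -/
def zcoord (p : R3) : ℝ := p.2.2

/-- `Below A B` (`A ≺ B`): there are `p ∈ A`, `q ∈ B` on a common vertical line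
with the `z`-coordinate of `p` strictly smaller than that of `q`. -/
def Below (A B : Set R3) : Prop :=
  ∃ p ∈ A, ∃ q ∈ B, vproj p = vproj q ∧ zcoord p < zcoord q

/-- A (finite) family of sets admits a depth order: it can be enumerated so that
`S_i ≺ S_j` implies `i < j`; equivalently, there is a rank function which is strictly
monotone along the `Below` relation. -/
def HasDepthOrder (F : Set (Set R3)) : Prop :=
  ∃ f : Set R3 → ℕ, ∀ A ∈ F, ∀ B ∈ F, Below A B → f A < f B

/-- A set is non-vertical if no two of its points lie on a common vertical line. -/
def NonVertical (S : Set R3) : Prop :=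
  ∀ p ∈ S, ∀ q ∈ S, vproj p = vproj q → p = q

/-- The triangle spanned by a triple of vertices. -/
def triOf (t : R3 × R3 × R3) : Set R3 := convexHull ℝ {t.1, t.2.1, t.2.2}

/-- The vertex set of a triangle given by a triple of vertices. -/
def vertsOf (t : R3 × R3 × R3) : Set R3 := {t.1, t.2.1, t.2.2}

/-- The edges of a triangle: the closed segments joining pairs of its vertices. -/
def edgesOf (t : R3 × R3 × R3) : Set (Set R3) :=
  {segment ℝ t.1 t.2.1, segment ℝ t.1 t.2.2, segment ℝ t.2.1 t.2.2}

/-- The three edges of a triangle, as pairs of endpoints. -/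
def edgePairsOf (t : R3 × R3 × R3) : Set (R3 × R3) :=
  {(t.1, t.2.1), (t.1, t.2.2), (t.2.1, t.2.2)}

/-- A triple of points are the vertices of a genuine triangle when they are
affinely independent. -/
def IsTriangleVerts (t : R3 × R3 × R3) : Prop :=
  AffineIndependent ℝ ![t.1, t.2.1, t.2.2]

/-- A set is a triangle if it is the convex hull of three affinely independent points. -/
def IsTriangle (S : Set R3) : Prop :=
  ∃ a b c : R3, AffineIndependent ℝ ![a, b, c] ∧ S = convexHull ℝ {a, b, c}

/-- The closed segment with the given pair of endpoints. -/
def segOf (e : R3 × R3) : Set R3 := segment ℝ e.1 e.2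

/-- The line through `ℓ.1` with direction `ℓ.2`. -/
def lineOf (ℓ : R3 × R3) : Set R3 := {p : R3 | ∃ c : ℝ, p = ℓ.1 + c • ℓ.2}

/-- The fragments obtained by cutting the set `S` at the points of `X`:
the connected components of `S \ X`. -/
def cutFragments (S : Set R3) (X : Set R3) : Set (Set R3) :=
  {F | ∃ p ∈ S \ X, F = connectedComponentIn (S \ X) p}

/-- A cycle of the relation `Below` inside a family `W`: a sequence
`w_1 ≺ w_2 ≺ … ≺ w_m ≺ w_1` with `m ≥ 1` and all members in `W`. -/
def BelowCycle (W : Set (Set R3)) : Prop :=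
  ∃ m : ℕ, 1 ≤ m ∧ ∃ w : ZMod m → Set R3,
    (∀ i, w i ∈ W) ∧ ∀ i, Below (w i) (w (i + 1))

namespace S1Aux

/-- cross product based edge functional: vanishes on the line through `P, Q`. -/
def ecross (P Q x : R2) : ℝ := (Q.1 - P.1) * (x.2 - P.2) - (Q.2 - P.2) * (x.1 - P.1)

lemma ecross_self_left (P Q : R2) : ecross P Q P = 0 := by simp [ecross]

lemma ecross_self_right (P Q : R2) : ecross P Q Q = 0 := by ring_nf; simp [ecross]; ring

lemma r2_combo (a b : ℝ) (x y : R2) :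
    a • x + b • y = ((a * x.1 + b * y.1, a * x.2 + b * y.2) : R2) := by
  simp [Prod.ext_iff, smul_eq_mul]

lemma r2_combo3 (a b c : ℝ) (x y z : R2) :
    a • x + b • y + c • z =
      ((a * x.1 + b * y.1 + c * z.1, a * x.2 + b * y.2 + c * z.2) : R2) := by
  simp [Prod.ext_iff, smul_eq_mul]

/-- `ecross` is affine in its last argument along affine combinations. -/
lemma ecross_combo2 (P Q x y : R2) (a b : ℝ) (hab : a + b = 1) :
    ecross P Q (a • x + b • y) = a * ecross P Q x + b * ecross P Q y := by
  have hb : b = 1 - a := by linarith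
  subst hb
  simp only [r2_combo, ecross]
  ring

lemma ecross_combo3 (P Q A B C : R2) (α β γ : ℝ) (h : α + β + γ = 1) :
    ecross P Q (α • A + β • B + γ • C) =
      α * ecross P Q A + β * ecross P Q B + γ * ecross P Q C := by
  have hγ : γ = 1 - α - β := by linarith
  subst hγ
  simp only [r2_combo3, ecross]
  ring

/-- cyclic invariance -/
lemma ecross_cycle (A B C : R2) : ecross B C A = ecross A B C := by
  simp only [ecross]; ring

/-- sum identity -/
lemma ecross_sum (A B C x : R2) :
    ecross B C x + ecross C A x + ecross A B x = ecross A B C := by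
  simp only [ecross]; ring

/-- Cramer reconstruction identity. -/
lemma ecross_cramer (A B C x : R2) :
    ecross B C x • A + ecross C A x • B + ecross A B x • C = ecross A B C • x := by
  simp only [r2_combo3, Prod.ext_iff, smul_eq_mul, Prod.smul_fst, Prod.smul_snd, ecross]
  constructor <;> ring

end S1Aux

namespace S1Aux

/-- Explicit convex combination representation for triangle hulls. -/
lemma tri_combo {A B C z : R2} (hz : z ∈ convexHull ℝ ({A, B, C} : Set R2)) :
    ∃ α β γ : ℝ, 0 ≤ α ∧ 0 ≤ β ∧ 0 ≤ γ ∧ α + β + γ = 1 ∧ z = α • A + β • B + γ • C := by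
  rw [show ({A, B, C} : Set R2) = insert A {B, C} from rfl,
    convexHull_insert ⟨B, by simp⟩, mem_convexJoin] at hz
  obtain ⟨A', hA', w, hw, hzw⟩ := hz
  rw [Set.mem_singleton_iff] at hA'
  subst hA'
  rw [convexHull_pair] at hw
  obtain ⟨b, c, hb, hc, hbc, hw'⟩ := hw
  obtain ⟨a, d, ha, hd, had, hz'⟩ := hzw
  refine ⟨a, d * b, d * c, ha, by positivity, by positivity, by nlinarith, ?_⟩
  rw [← hz', ← hw']
  simp only [smul_add, smul_smul]
  abel

lemma tri_of_combo {A B C z : R2} {α β γ : ℝ} (hα : 0 ≤ α) (hβ : 0 ≤ β) (hγ : 0 ≤ γ)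
    (hs : α + β + γ = 1) (hz : z = α • A + β • B + γ • C) :
    z ∈ convexHull ℝ ({A, B, C} : Set R2) := by
  have hA : A ∈ convexHull ℝ ({A, B, C} : Set R2) := subset_convexHull ℝ _ (by simp)
  have hB : B ∈ convexHull ℝ ({A, B, C} : Set R2) := subset_convexHull ℝ _ (by simp)
  have hC : C ∈ convexHull ℝ ({A, B, C} : Set R2) := subset_convexHull ℝ _ (by simp)
  by_cases h0 : β + γ = 0
  · have hβ0 : β = 0 := by linarith
    have hγ0 : γ = 0 := by linarith
    have : z = A := by rw [hz, hβ0, hγ0]; simp; rw [show α = 1 by linarith]; simp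
    rw [this]; exact hA
  · have hs' : 0 < β + γ := lt_of_le_of_ne (by linarith) (Ne.symm h0)
    set w := (β / (β + γ)) • B + (γ / (β + γ)) • C with hw
    have hwmem : w ∈ convexHull ℝ ({A, B, C} : Set R2) := by
      have := (convex_convexHull ℝ ({A, B, C} : Set R2)).segment_subset hB hC
      apply this
      exact ⟨β / (β + γ), γ / (β + γ), by positivity, by positivity, by field_simp, rfl⟩
    have := (convex_convexHull ℝ ({A, B, C} : Set R2)).segment_subset hA hwmem
    apply this
    refine ⟨α, β + γ, hα, le_of_lt hs', by linarith, ?_⟩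
    rw [hz, hw, smul_add, smul_smul, smul_smul]
    have e1 : (β + γ) * (β / (β + γ)) = β := by field_simp
    have e2 : (β + γ) * (γ / (β + γ)) = γ := by field_simp
    rw [e1, e2, add_assoc]

/-- Triangle membership characterization by the three (orientation-corrected)
edge functionals. -/
lemma tri_mem_iff {A B C : R2} (hd : ecross A B C ≠ 0) (z : R2) :
    z ∈ convexHull ℝ ({A, B, C} : Set R2) ↔
      0 ≤ ecross A B C * ecross B C z ∧ 0 ≤ ecross A B C * ecross C A z ∧
      0 ≤ ecross A B C * ecross A B z := by
  constructor
  · intro hz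
    obtain ⟨α, β, γ, hα, hβ, hγ, hs, hcombo⟩ := tri_combo hz
    have e1 : ecross B C z = α * ecross A B C := by
      rw [hcombo, ecross_combo3 _ _ _ _ _ _ _ _ hs, ecross_self_left, ecross_self_right,
        ecross_cycle]
      ring
    have e2 : ecross C A z = β * ecross A B C := by
      rw [hcombo, ecross_combo3 _ _ _ _ _ _ _ _ hs, ecross_self_right, ecross_self_left]
      rw [show ecross C A B = ecross A B C from by rw [← ecross_cycle, ← ecross_cycle]]
      ring
    have e3 : ecross A B z = γ * ecross A B C := by
      rw [hcombo, ecross_combo3 _ _ _ _ _ _ _ _ hs, ecross_self_left, ecross_self_right]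
      ring
    rw [e1, e2, e3]
    refine ⟨by nlinarith [sq_nonneg (ecross A B C)], by nlinarith [sq_nonneg (ecross A B C)],
      by nlinarith [sq_nonneg (ecross A B C)]⟩
  · rintro ⟨h1, h2, h3⟩
    have hd2 : 0 < ecross A B C ^ 2 := by positivity
    refine tri_of_combo (α := ecross A B C * ecross B C z / ecross A B C ^ 2)
      (β := ecross A B C * ecross C A z / ecross A B C ^ 2)
      (γ := ecross A B C * ecross A B z / ecross A B C ^ 2)
      (by positivity) (by positivity) (by positivity) ?_ ?_
    · have hsum := ecross_sum A B C z
      field_simp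
      linear_combination hsum
    · have hc := ecross_cramer A B C z
      rw [Prod.ext_iff] at hc ⊢
      simp only [r2_combo3, Prod.smul_fst, Prod.smul_snd, smul_eq_mul] at hc ⊢
      obtain ⟨hc1, hc2⟩ := hc
      constructor
      · field_simp
        linear_combination -hc1
      · field_simp
        linear_combination -hc2

/-- A point of the triangle where the `AB` edge functional vanishes lies on
the closed edge `AB`. -/
lemma tri_tight_AB {A B C z : R2} (hd : ecross A B C ≠ 0)
    (hz : z ∈ convexHull ℝ ({A, B, C} : Set R2)) (h0 : ecross A B z = 0) :
    z ∈ segment ℝ A B := by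
  obtain ⟨α, β, γ, hα, hβ, hγ, hs, hcombo⟩ := tri_combo hz
  have e3 : ecross A B z = γ * ecross A B C := by
    rw [hcombo, ecross_combo3 _ _ _ _ _ _ _ _ hs, ecross_self_left, ecross_self_right]
    ring
  have hγ0 : γ = 0 := by
    rcases mul_eq_zero.1 (e3 ▸ h0) with h | h
    · exact h
    · exact absurd h hd
  exact ⟨α, β, hα, hβ, by linarith, by rw [hcombo, hγ0]; simp⟩

lemma tri_rotate (A B C : R2) :
    convexHull ℝ ({A, B, C} : Set R2) = convexHull ℝ ({B, C, A} : Set R2) := by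
  have : ({A, B, C} : Set R2) = {B, C, A} := by
    ext x; simp only [Set.mem_insert_iff, Set.mem_singleton_iff]; tauto
  rw [this]

lemma tri_tight_BC {A B C z : R2} (hd : ecross A B C ≠ 0)
    (hz : z ∈ convexHull ℝ ({A, B, C} : Set R2)) (h0 : ecross B C z = 0) :
    z ∈ segment ℝ B C := by
  refine tri_tight_AB (C := A) ?_ ?_ h0
  · rw [ecross_cycle]; exact hd
  · rw [← tri_rotate]; exact hz

lemma tri_tight_CA {A B C z : R2} (hd : ecross A B C ≠ 0)
    (hz : z ∈ convexHull ℝ ({A, B, C} : Set R2)) (h0 : ecross C A z = 0) :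
    z ∈ segment ℝ C A := by
  refine tri_tight_AB (C := B) ?_ ?_ h0
  · rw [ecross_cycle, ecross_cycle]; exact hd
  · rw [tri_rotate]; exact hz

lemma edge_sub_hull_AB (A B C : R2) : segment ℝ A B ⊆ convexHull ℝ ({A, B, C} : Set R2) := by
  rw [← convexHull_pair]
  exact convexHull_mono (by intro x hx; simp at hx; rcases hx with h | h <;> simp [h])

lemma edge_sub_hull_BC (A B C : R2) : segment ℝ B C ⊆ convexHull ℝ ({A, B, C} : Set R2) := by
  rw [← convexHull_pair]
  exact convexHull_mono (by intro x hx; simp at hx; rcases hx with h | h <;> simp [h])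

lemma edge_sub_hull_CA (A B C : R2) : segment ℝ C A ⊆ convexHull ℝ ({A, B, C} : Set R2) := by
  rw [← convexHull_pair]
  exact convexHull_mono (by intro x hx; simp at hx; rcases hx with h | h <;> simp [h])

end S1Aux

namespace S1Aux

/-- linear dependency from vanishing cross product -/
lemma dep_of_cross {u w : R2} (hu : u ≠ 0) (h : u.1 * w.2 - u.2 * w.1 = 0) :
    ∃ c : ℝ, w = c • u := by
  by_cases h1 : u.1 ≠ 0
  · refine ⟨w.1 / u.1, ?_⟩
    rw [Prod.ext_iff]
    constructor
    · simp [smul_eq_mul]; field_simp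
    · simp [smul_eq_mul]; field_simp; linear_combination h
  · push_neg at h1
    have h2 : u.2 ≠ 0 := by
      intro h2
      exact hu (Prod.ext h1 h2)
    refine ⟨w.2 / u.2, ?_⟩
    rw [Prod.ext_iff]
    constructor
    · simp [smul_eq_mul]; field_simp; linear_combination -h
    · simp [smul_eq_mul]; field_simp
  
/-- if three planar points have vanishing cross, one is a convex combination
of the other two. -/
lemma mid_of_cross {A B C : R2} (h : ecross A B C = 0) :
    ∃ σ : ℝ, 0 ≤ σ ∧ σ ≤ 1 ∧
      (C = (1 - σ) • A + σ • B ∨ B = (1 - σ) • A + σ • C ∨ A = (1 - σ) • B + σ • C) := by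
  by_cases hAB : B = A
  · exact ⟨0, le_refl _, zero_le_one, Or.inr (Or.inl (by rw [hAB]; simp))⟩
  · have hu : B - A ≠ 0 := sub_ne_zero.2 hAB
    have h' : (B - A).1 * (C - A).2 - (B - A).2 * (C - A).1 = 0 := by
      simpa [ecross] using h
    obtain ⟨c, hc⟩ := dep_of_cross hu h'
    have hC : C = A + c • (B - A) := by
      have : C - A = c • (B - A) := hc
      rw [← this]; abel
    rcases le_or_gt c 0 with hc0 | hc0
    · -- A between B and C : A = (1-σ)•B + σ•C, σ = 1/(1-c)
      have hne : (1 : ℝ) - c ≠ 0 := by linarith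
      refine ⟨1 / (1 - c), le_of_lt (div_pos one_pos (by linarith)), ?_,
        Or.inr (Or.inr ?_)⟩
      · rw [div_le_one (by linarith)]; linarith
      · rw [hC]
        rw [Prod.ext_iff]
        simp only [r2_combo, Prod.fst_add, Prod.snd_add, Prod.smul_fst, Prod.smul_snd,
          smul_eq_mul, Prod.fst_sub, Prod.snd_sub]
        constructor <;> (field_simp; ring)
    · rcases le_or_gt c 1 with hc1 | hc1
      · refine ⟨c, le_of_lt hc0, hc1, Or.inl ?_⟩
        rw [hC, Prod.ext_iff]
        simp only [r2_combo, Prod.fst_add, Prod.snd_add, Prod.smul_fst, Prod.smul_snd,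
          smul_eq_mul, Prod.fst_sub, Prod.snd_sub]
        constructor <;> ring
      · -- B between A and C : B = (1-σ)•A + σ•C, σ = 1/c
        refine ⟨1 / c, by positivity, ?_, Or.inr (Or.inl ?_)⟩
        · rw [div_le_one (by linarith)]; linarith
        · have hne : c ≠ 0 := by linarith
          rw [hC, Prod.ext_iff]
          simp only [r2_combo, Prod.fst_add, Prod.snd_add, Prod.smul_fst, Prod.smul_snd,
            smul_eq_mul, Prod.fst_sub, Prod.snd_sub]
          constructor <;> (field_simp; ring)

/-- vanishing of an affine function at a point of a segment with endpoint
values of opposite (weak) signs. -/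
lemma segzero (φ : R2 → ℝ)
    (haff : ∀ (a b : ℝ) (x y : R2), a + b = 1 → φ (a • x + b • y) = a * φ x + b * φ y)
    {u v : R2} (h0 : φ u ≤ 0) (h1 : 0 ≤ φ v) :
    ∃ z ∈ segment ℝ u v, φ z = 0 := by
  rcases eq_or_lt_of_le h0 with he | hlt
  · exact ⟨u, ⟨1, 0, zero_le_one, le_refl _, by ring, by simp⟩, he⟩
  · set t := φ u / (φ u - φ v) with ht
    have hden : φ u - φ v < 0 := by linarith
    have ht0 : 0 ≤ t := by
      rw [ht, div_nonneg_iff]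
      exact Or.inr ⟨le_of_lt hlt, le_of_lt hden⟩
    have ht1 : t ≤ 1 := by
      rw [ht, div_le_one_iff]
      exact Or.inr (Or.inr ⟨hden, by linarith⟩)
    refine ⟨(1 - t) • u + t • v, ⟨1 - t, t, by linarith, ht0, by ring, rfl⟩, ?_⟩
    rw [haff _ _ _ _ (by ring)]
    have hden' : φ u - φ v ≠ 0 := ne_of_lt hden
    rw [ht]
    field_simp
    ring

/-- An affine function nonnegative at both segment endpoints is nonnegative
on the segment. -/
lemma segnonneg (φ : R2 → ℝ)
    (haff : ∀ (a b : ℝ) (x y : R2), a + b = 1 → φ (a • x + b • y) = a * φ x + b * φ y)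
    {u v z : R2} (h0 : 0 ≤ φ u) (h1 : 0 ≤ φ v) (hz : z ∈ segment ℝ u v) : 0 ≤ φ z := by
  obtain ⟨a, b, ha, hb, hab, hz'⟩ := hz
  rw [← hz', haff _ _ _ _ hab]
  positivity

/-- An affine function vanishing at both segment endpoints vanishes on the
segment. -/
lemma segzero_of_ends (φ : R2 → ℝ)
    (haff : ∀ (a b : ℝ) (x y : R2), a + b = 1 → φ (a • x + b • y) = a * φ x + b * φ y)
    {u v z : R2} (h0 : φ u = 0) (h1 : φ v = 0) (hz : z ∈ segment ℝ u v) : φ z = 0 := by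
  obtain ⟨a, b, ha, hb, hab, hz'⟩ := hz
  rw [← hz', haff _ _ _ _ hab, h0, h1]
  ring

end S1Aux

namespace S1Aux

/-- The chord of a triangle-edge line inside a convex set avoiding the
endpoints lies inside the closed edge. -/
lemma wall {Δp : Set R2} (hconv : Convex ℝ Δp) {P Q z p : R2} (hPQ : P ≠ Q)
    (hline : ecross P Q z = 0) (hp : p ∈ segment ℝ P Q)
    (hzΔ : z ∈ Δp) (hpΔ : p ∈ Δp) (hPΔ : P ∉ Δp) (hQΔ : Q ∉ Δp) :
    z ∈ segment ℝ P Q := by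
  have hv : Q - P ≠ 0 := sub_ne_zero.2 (Ne.symm hPQ)
  have h' : (Q - P).1 * (z - P).2 - (Q - P).2 * (z - P).1 = 0 := by
    simpa [ecross, Prod.fst_sub, Prod.snd_sub] using hline
  obtain ⟨c, hc⟩ := dep_of_cross hv h'
  have hz2 : z = P + c • (Q - P) := by rw [← hc]; abel
  obtain ⟨a, b, ha, hb, hab, hp'⟩ := hp
  have hb1 : b ≤ 1 := by linarith
  have hp2 : p = P + b • (Q - P) := by
    rw [← hp', smul_sub]
    rw [show a = 1 - b by linarith]
    rw [sub_smul, one_smul]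
    abel
  rcases le_or_gt 0 c with hc0 | hc0
  · rcases le_or_gt c 1 with hc1 | hc1
    · -- z on the closed edge
      refine ⟨1 - c, c, by linarith, hc0, by ring, ?_⟩
      rw [hz2, smul_sub, sub_smul, one_smul]
      abel
    · -- c > 1 : Q strictly between z and p, contradiction with Q ∉ Δp
      exfalso
      apply hQΔ
      have hbc : c - b > 0 := by linarith
      have hQmem : Q = (1 - (c - 1) / (c - b)) • z + ((c - 1) / (c - b)) • p := by
        rw [hz2, hp2, Prod.ext_iff]
        simp only [r2_combo, Prod.fst_add, Prod.snd_add, Prod.smul_fst, Prod.smul_snd,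
          smul_eq_mul, Prod.fst_sub, Prod.snd_sub]
        have hbc' : c - b ≠ 0 := ne_of_gt hbc
        constructor <;> (field_simp; ring)
      have : Q ∈ segment ℝ z p := by
        refine ⟨1 - (c - 1) / (c - b), (c - 1) / (c - b), ?_, ?_, by ring, hQmem.symm⟩
        · have h1 : (c - 1) / (c - b) ≤ 1 := by
            rw [div_le_one hbc]; linarith
          linarith
        · apply div_nonneg (by linarith) (le_of_lt hbc)
      exact hconv.segment_subset hzΔ hpΔ this
  · -- c < 0 : P strictly between z and p, contradiction with P ∉ Δp
    exfalso
    apply hPΔ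
    have hbc : b - c > 0 := by linarith
    have hPmem : P = (1 - (-c) / (b - c)) • z + ((-c) / (b - c)) • p := by
      rw [hz2, hp2, Prod.ext_iff]
      simp only [r2_combo, Prod.fst_add, Prod.snd_add, Prod.smul_fst, Prod.smul_snd,
        smul_eq_mul, Prod.fst_sub, Prod.snd_sub]
      have hbc' : b - c ≠ 0 := ne_of_gt hbc
      constructor <;> (field_simp; ring)
    have : P ∈ segment ℝ z p := by
      refine ⟨1 - (-c) / (b - c), (-c) / (b - c), ?_, ?_, by ring, hPmem.symm⟩
      · have h1 : (-c) / (b - c) ≤ 1 := by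
          rw [div_le_one hbc]; linarith
        linarith
      · apply div_nonneg (by linarith) (le_of_lt hbc)
    exact hconv.segment_subset hzΔ hpΔ this

/-- entry root of an affine constraint along a parametrized segment -/
def rho (u v : ℝ) : ℝ := if u < 0 then u / (u - v) else 0

lemma rho_mem {u v : ℝ} (hv : 0 ≤ v) : 0 ≤ rho u v ∧ rho u v ≤ 1 := by
  rw [rho]
  split_ifs with h
  · have hden : u - v < 0 := by linarith
    constructor
    · rw [div_nonneg_iff]; exact Or.inr ⟨le_of_lt h, le_of_lt hden⟩
    · rw [div_le_one_iff]; exact Or.inr (Or.inr ⟨hden, by linarith⟩)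
  · exact ⟨le_refl 0, zero_le_one⟩

lemma rho_key {u v : ℝ} (hu : u < 0) (hv : 0 ≤ v) (t : ℝ) :
    (1 - t) * u + t * v = (t - rho u v) * (v - u) := by
  have hden : u - v ≠ 0 := by intro h; linarith
  rw [rho, if_pos hu]
  field_simp
  ring

lemma rho_nonneg_at {u v : ℝ} (hv : 0 ≤ v) {t : ℝ} (ht : rho u v ≤ t) (ht1 : t ≤ 1) :
    0 ≤ (1 - t) * u + t * v := by
  rcases lt_or_ge u 0 with hu | hu
  · rw [rho_key hu hv]
    apply mul_nonneg
    · exact sub_nonneg.2 ht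
    · linarith
  · have h1t : 0 ≤ 1 - t := by linarith
    have ht0' : 0 ≤ t := le_trans (rho_mem hv).1 ht
    exact add_nonneg (mul_nonneg h1t hu) (mul_nonneg ht0' hv)

lemma rho_zero_at {u v : ℝ} (hu : u < 0) (hv : 0 ≤ v) :
    (1 - rho u v) * u + rho u v * v = 0 := by
  rw [rho_key hu hv]; ring

lemma rho_pos {u v : ℝ} (hu : u < 0) (hv : 0 ≤ v) : 0 < rho u v := by
  rw [rho, if_pos hu]
  rw [div_pos_iff]
  exact Or.inr ⟨hu, by linarith⟩

/-- Entry lemma: walking along a segment from a point violating one of three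
affine constraints to a point satisfying all three, there is a point
satisfying all three where a constraint violated at the start is tight. -/
lemma entry (f g h : R2 → ℝ)
    (haf : ∀ (a b : ℝ) (x y : R2), a + b = 1 → f (a • x + b • y) = a * f x + b * f y)
    (hag : ∀ (a b : ℝ) (x y : R2), a + b = 1 → g (a • x + b • y) = a * g x + b * g y)
    (hah : ∀ (a b : ℝ) (x y : R2), a + b = 1 → h (a • x + b • y) = a * h x + b * h y)
    {y₀ y₁ : R2} (hviol : f y₀ < 0 ∨ g y₀ < 0 ∨ h y₀ < 0)
    (hin : 0 ≤ f y₁ ∧ 0 ≤ g y₁ ∧ 0 ≤ h y₁) :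
    ∃ p ∈ segment ℝ y₀ y₁, (0 ≤ f p ∧ 0 ≤ g p ∧ 0 ≤ h p) ∧
      ((f p = 0 ∧ f y₀ < 0) ∨ (g p = 0 ∧ g y₀ < 0) ∨ (h p = 0 ∧ h y₀ < 0)) := by
  obtain ⟨hf1, hg1, hh1⟩ := hin
  set rf := rho (f y₀) (f y₁) with hrf
  set rg := rho (g y₀) (g y₁) with hrg
  set rh := rho (h y₀) (h y₁) with hrh
  set t := max rf (max rg rh) with htdef
  have hrfm := rho_mem (u := f y₀) hf1
  have hrgm := rho_mem (u := g y₀) hg1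
  have hrhm := rho_mem (u := h y₀) hh1
  have ht0 : 0 ≤ t := le_trans hrfm.1 (le_max_left _ _)
  have ht1 : t ≤ 1 := by
    rw [htdef]
    exact max_le hrfm.2 (max_le hrgm.2 hrhm.2)
  set p := (1 - t) • y₀ + t • y₁ with hpdef
  have hpseg : p ∈ segment ℝ y₀ y₁ := ⟨1 - t, t, by linarith, ht0, by ring, rfl⟩
  have hfp : f p = (1 - t) * f y₀ + t * f y₁ := haf _ _ _ _ (by ring)
  have hgp : g p = (1 - t) * g y₀ + t * g y₁ := hag _ _ _ _ (by ring)
  have hhp : h p = (1 - t) * h y₀ + t * h y₁ := hah _ _ _ _ (by ring)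
  have hfge : 0 ≤ f p := by
    rw [hfp]; exact rho_nonneg_at hf1 (le_max_left _ _) ht1
  have hgge : 0 ≤ g p := by
    rw [hgp]
    exact rho_nonneg_at hg1 (le_trans (le_max_left _ _) (le_max_right _ _)) ht1
  have hhge : 0 ≤ h p := by
    rw [hhp]
    exact rho_nonneg_at hh1 (le_trans (le_max_right _ _) (le_max_right _ _)) ht1
  have htpos : 0 < t := by
    rcases hviol with hv | hv | hv
    · exact lt_of_lt_of_le (rho_pos hv hf1) (le_max_left _ _)
    · exact lt_of_lt_of_le (rho_pos hv hg1)
        (le_trans (le_max_left _ _) (le_max_right _ _))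
    · exact lt_of_lt_of_le (rho_pos hv hh1)
        (le_trans (le_max_right _ _) (le_max_right _ _))
  refine ⟨p, hpseg, ⟨hfge, hgge, hhge⟩, ?_⟩
  rcases max_choice rf (max rg rh) with hmax | hmax
  · -- t = rf
    left
    have hfy0 : f y₀ < 0 := by
      by_contra hcon
      push_neg at hcon
      have : rf = 0 := by rw [hrf, rho, if_neg (not_lt.2 hcon)]
      rw [htdef, hmax, this] at htpos
      exact lt_irrefl 0 htpos
    refine ⟨?_, hfy0⟩
    rw [hfp, htdef, hmax]
    exact rho_zero_at hfy0 hf1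
  · rcases max_choice rg rh with hmax2 | hmax2
    · right; left
      have hgy0 : g y₀ < 0 := by
        by_contra hcon
        push_neg at hcon
        have : rg = 0 := by rw [hrg, rho, if_neg (not_lt.2 hcon)]
        rw [htdef, hmax, hmax2, this] at htpos
        exact lt_irrefl 0 htpos
      refine ⟨?_, hgy0⟩
      rw [hgp, htdef, hmax, hmax2]
      exact rho_zero_at hgy0 hg1
    · right; right
      have hhy0 : h y₀ < 0 := by
        by_contra hcon
        push_neg at hcon
        have : rh = 0 := by rw [hrh, rho, if_neg (not_lt.2 hcon)]
        rw [htdef, hmax, hmax2, this] at htpos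
        exact lt_irrefl 0 htpos
      refine ⟨?_, hhy0⟩
      rw [hhp, htdef, hmax, hmax2]
      exact rho_zero_at hhy0 hh1

end S1Aux

namespace S1Aux

lemma vproj_combo (a b : ℝ) (x y : R3) :
    vproj (a • x + b • y) = a • vproj x + b • vproj y := by
  simp [vproj, Prod.ext_iff, smul_eq_mul]

lemma zcoord_combo (a b : ℝ) (x y : R3) :
    zcoord (a • x + b • y) = a * zcoord x + b * zcoord y := by
  simp [zcoord, smul_eq_mul]

lemma pt_ext {x y : R3} (h1 : vproj x = vproj y) (h2 : zcoord x = zcoord y) : x = y := by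
  rw [Prod.ext_iff] at h1 ⊢
  simp only [vproj] at h1
  refine ⟨h1.1, ?_⟩
  rw [Prod.ext_iff]
  exact ⟨h1.2, h2⟩

/-- Disjoint convex sets in space cannot cross vertically : if `S` is below
`S'` over one point of the common projection it is below over every point. -/
lemma no_double_cross {S S' : Set R3} (hS : Convex ℝ S) (hS' : Convex ℝ S')
    (hdisj : Disjoint S S') {p P q Q : R3}
    (hp : p ∈ S) (hP : P ∈ S) (hq : q ∈ S') (hQ : Q ∈ S')
    (h1 : vproj p = vproj q) (h2 : vproj P = vproj Q)
    (hlt : zcoord p < zcoord q) : zcoord P < zcoord Q := by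
  by_contra hcon
  push_neg at hcon
  -- affine root along matched segments
  set δ0 := zcoord q - zcoord p with hδ0
  set δ1 := zcoord Q - zcoord P with hδ1
  have hδ0pos : 0 < δ0 := by rw [hδ0]; linarith
  have hδ1np : δ1 ≤ 0 := by rw [hδ1]; linarith
  set t := δ0 / (δ0 - δ1) with htdef
  have hden : 0 < δ0 - δ1 := by linarith
  have ht0 : 0 ≤ t := le_of_lt (div_pos hδ0pos hden)
  have ht1 : t ≤ 1 := by rw [htdef, div_le_one hden]; linarith
  set u := (1 - t) • p + t • P with hu
  set v := (1 - t) • q + t • Q with hv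
  have huS : u ∈ S := hS hp hP (by linarith) ht0 (by ring)
  have hvS : v ∈ S' := hS' hq hQ (by linarith) ht0 (by ring)
  have hproj : vproj u = vproj v := by
    rw [hu, hv, vproj_combo, vproj_combo, h1, h2]
  have hz : zcoord u = zcoord v := by
    rw [hu, hv, zcoord_combo, zcoord_combo]
    have : δ0 ≠ 0 := ne_of_gt hδ0pos
    have h5 : (1 - t) * δ0 + t * δ1 = 0 := by
      rw [htdef]
      field_simp
      ring
    rw [hδ0, hδ1] at h5
    linarith
  have : u = v := pt_ext hproj hz
  exact Set.disjoint_left.1 hdisj huS (this ▸ hvS)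

/-- The projected vertices of a nonvertical triangle are planar-nondegenerate. -/
lemma proj_nondeg {t : R3 × R3 × R3} (htri : IsTriangleVerts t)
    (hnv : NonVertical (triOf t)) :
    ecross (vproj t.1) (vproj t.2.1) (vproj t.2.2) ≠ 0 := by
  intro h0
  obtain ⟨σ, hσ0, hσ1, hcase⟩ := mid_of_cross h0
  have hmemA : t.1 ∈ triOf t := subset_convexHull ℝ _ (by simp [vertsOf])
  have hmemB : t.2.1 ∈ triOf t := subset_convexHull ℝ _ (by simp)
  have hmemC : t.2.2 ∈ triOf t := subset_convexHull ℝ _ (by simp)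
  have hconv : Convex ℝ (triOf t) := convex_convexHull ℝ _
  have hcol : ¬Collinear ℝ ({t.1, t.2.1, t.2.2} : Set R3) :=
    affineIndependent_iff_not_collinear_set.1 htri
  rcases hcase with hmid | hmid | hmid
  · set w := (1 - σ) • t.1 + σ • t.2.1 with hw
    have hwmem : w ∈ triOf t := hconv hmemA hmemB (by linarith) hσ0 (by ring)
    have hproj : vproj w = vproj t.2.2 := by rw [hw, vproj_combo, ← hmid]
    have heq := hnv w hwmem t.2.2 hmemC hproj
    have hline : t.2.2 ∈ affineSpan ℝ ({t.1, t.2.1} : Set R3) := by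
      rw [← heq, hw, ← AffineMap.lineMap_apply_module]
      exact AffineMap.lineMap_mem_affineSpan_pair σ _ _
    have hco : Collinear ℝ ({t.2.2, t.1, t.2.1} : Set R3) :=
      collinear_insert_of_mem_affineSpan_pair hline
    apply hcol
    have hsets : ({t.1, t.2.1, t.2.2} : Set R3) = {t.2.2, t.1, t.2.1} := by
      ext x; simp only [Set.mem_insert_iff, Set.mem_singleton_iff]; tauto
    rw [hsets]; exact hco
  · set w := (1 - σ) • t.1 + σ • t.2.2 with hw
    have hwmem : w ∈ triOf t := hconv hmemA hmemC (by linarith) hσ0 (by ring)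
    have hproj : vproj w = vproj t.2.1 := by rw [hw, vproj_combo, ← hmid]
    have heq := hnv w hwmem t.2.1 hmemB hproj
    have hline : t.2.1 ∈ affineSpan ℝ ({t.1, t.2.2} : Set R3) := by
      rw [← heq, hw, ← AffineMap.lineMap_apply_module]
      exact AffineMap.lineMap_mem_affineSpan_pair σ _ _
    have hco : Collinear ℝ ({t.2.1, t.1, t.2.2} : Set R3) :=
      collinear_insert_of_mem_affineSpan_pair hline
    apply hcol
    have hsets : ({t.1, t.2.1, t.2.2} : Set R3) = {t.2.1, t.1, t.2.2} := by
      ext x; simp only [Set.mem_insert_iff, Set.mem_singleton_iff]; tauto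
    rw [hsets]; exact hco
  · set w := (1 - σ) • t.2.1 + σ • t.2.2 with hw
    have hwmem : w ∈ triOf t := hconv hmemB hmemC (by linarith) hσ0 (by ring)
    have hproj : vproj w = vproj t.1 := by rw [hw, vproj_combo, ← hmid]
    have heq := hnv w hwmem t.1 hmemA hproj
    have hline : t.1 ∈ affineSpan ℝ ({t.2.1, t.2.2} : Set R3) := by
      rw [← heq, hw, ← AffineMap.lineMap_apply_module]
      exact AffineMap.lineMap_mem_affineSpan_pair σ _ _
    have hco : Collinear ℝ ({t.1, t.2.1, t.2.2} : Set R3) :=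
      collinear_insert_of_mem_affineSpan_pair hline
    exact hcol hco

end S1Aux

namespace S1Aux

lemma zmod_cast_inj {k : ℕ} [NeZero k] {a b : ℕ} (ha : a < k) (hb : b < k)
    (h : (a : ZMod k) = (b : ZMod k)) : a = b := by
  have := congrArg ZMod.val h
  rwa [ZMod.val_cast_of_lt ha, ZMod.val_cast_of_lt hb] at this

lemma zmod_cast_val {k : ℕ} [NeZero k] (a : ZMod k) : ((a.val : ℕ) : ZMod k) = a :=
  ZMod.natCast_rightInverse a

lemma zmod_neg_one_cast {k : ℕ} (hk : 1 ≤ k) : ((k - 1 : ℕ) : ZMod k) = -1 := by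
  have : ((k : ℕ) : ZMod k) = 0 := ZMod.natCast_self k
  rw [Nat.cast_sub hk, this]
  simp

lemma zmod_val_add_one {k : ℕ} [NeZero k] {a : ZMod k} (h : a.val + 1 < k) :
    (a + 1).val = a.val + 1 := by
  have h1 : a + 1 = ((a.val + 1 : ℕ) : ZMod k) := by
    push_cast
    rw [zmod_cast_val]
  rw [h1, ZMod.val_cast_of_lt h]

lemma zmod_val_ne_last {k : ℕ} [NeZero k] {a : ZMod k} (h : a ≠ -1) (hk : 1 ≤ k) :
    a.val ≠ k - 1 := by
  intro hval
  apply h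
  rw [← zmod_cast_val a, hval, zmod_neg_one_cast hk]

/-- Key consequence of minimality : there is no `Below` relation except the
consecutive ones. -/
lemma nobelow {k : ℕ} (hk : 3 ≤ k) (P : ZMod k → Set R3) (hPinj : Function.Injective P)
    (hPcyc : ∀ i, Below (P i) (P (i + 1)))
    (hmin : ∀ W : Set (Set R3), W.Nonempty → W ⊂ Set.range P → ¬ BelowCycle W)
    {i j : ZMod k} (hij : j ≠ i + 1) (hb : Below (P i) (P j)) : False := by
  haveI : NeZero k := ⟨by omega⟩
  set D := (i - j).val with hD
  have hvne : i - j ≠ -1 := by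
    intro h
    apply hij
    rw [sub_eq_iff_eq_add] at h
    rw [h]; ring
  have hDlt : D < k - 1 := by
    have h1 : D < k := ZMod.val_lt (i - j)
    have h2 : D ≠ k - 1 := zmod_val_ne_last hvne (by omega)
    omega
  set W := P '' {r | ∃ n : ℕ, n ≤ D ∧ r = j + (n : ZMod k)} with hW
  apply hmin W
  · exact ⟨P j, j, ⟨0, Nat.zero_le _, by simp⟩, rfl⟩
  · constructor
    · rintro _ ⟨r, _, rfl⟩; exact ⟨r, rfl⟩
    · intro hsub
      have : P (i + 1) ∈ W := hsub ⟨i + 1, rfl⟩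
      obtain ⟨r, ⟨n, hn, hr⟩, heq⟩ := this
      have hri : r = i + 1 := hPinj heq
      rw [hri] at hr
      -- hr : i + 1 = j + n
      have hcast : (n : ZMod k) = (i - j) + 1 := by
        have h9 : (n : ZMod k) = i + 1 - j := by rw [hr]; ring
        rw [h9]; ring
      have hD1lt : D + 1 < k := by omega
      have hvalij : ((i : ZMod k) - j + 1).val = D + 1 := zmod_val_add_one (by omega)
      have hnk : n < k := by omega
      have : n = D + 1 := by
        have := congrArg ZMod.val hcast
        rwa [ZMod.val_cast_of_lt hnk, hvalij] at this
      omega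
  · refine ⟨D + 1, by omega, fun s => P (j + ((s.val : ℕ) : ZMod k)), ?_, ?_⟩
    · intro s
      haveI : NeZero (D + 1) := ⟨by omega⟩
      refine ⟨j + ((s.val : ℕ) : ZMod k), ⟨s.val, ?_, rfl⟩, rfl⟩
      have := ZMod.val_lt s
      omega
    · intro s
      haveI : NeZero (D + 1) := ⟨by omega⟩
      rcases Nat.lt_or_ge s.val D with hs | hs
      · have h1 : (s + 1).val = s.val + 1 := by
          apply zmod_val_add_one
          omega
        show Below (P (j + ((s.val : ℕ) : ZMod k))) (P (j + (((s + 1).val : ℕ) : ZMod k)))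
        rw [h1]
        have h2 : ((s.val + 1 : ℕ) : ZMod k) = ((s.val : ℕ) : ZMod k) + 1 := by push_cast; ring
        rw [h2, ← add_assoc]
        exact hPcyc _
      · have hsD : s.val = D := by
          have := ZMod.val_lt s
          omega
      -- s = last index
        have hs1 : s + 1 = 0 := by
          have h7 : s = ((D : ℕ) : ZMod (D + 1)) := by
            conv_lhs => rw [← zmod_cast_val s]
            exact congrArg _ hsD
          rw [h7]
          have h8 : ((D : ℕ) : ZMod (D + 1)) + 1 = ((D + 1 : ℕ) : ZMod (D + 1)) := by
            push_cast; ring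
          rw [h8, ZMod.natCast_self]
        show Below (P (j + ((s.val : ℕ) : ZMod k))) (P (j + (((s + 1).val : ℕ) : ZMod k)))
        rw [hs1, hsD]
        have hD2 : ((D : ℕ) : ZMod k) = i - j := by rw [hD]; exact zmod_cast_val _
        rw [hD2]
        have h6 : j + (i - j) = i := by ring
        rw [h6]
        simp only [ZMod.val_zero, Nat.cast_zero, add_zero]
        exact hb

end S1Aux

namespace S1Aux

lemma scaled_ecross_affine (d : ℝ) (P Q : R2) :
    ∀ (a b : ℝ) (x y : R2), a + b = 1 →
      d * ecross P Q (a • x + b • y) = a * (d * ecross P Q x) + b * (d * ecross P Q y) := by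
  intro a b x y hab
  rw [ecross_combo2 _ _ _ _ _ _ hab]
  ring

lemma vert_ne {A B C : R2} (hd : ecross A B C ≠ 0) : A ≠ B ∧ B ≠ C ∧ C ≠ A := by
  refine ⟨?_, ?_, ?_⟩
  · intro h; apply hd; rw [h]; simp only [ecross]; ring
  · intro h; apply hd; rw [h]; simp only [ecross]; ring
  · intro h; apply hd; rw [h]; simp only [ecross]; ring

/-- The planar core construction : a chained family of edge points. -/
lemma core {k : ℕ} (hk : 3 ≤ k)
    (A B C : ZMod k → R2)
    (hd : ∀ j, ecross (A j) (B j) (C j) ≠ 0)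
    (Δp : Set R2) (hconv : Convex ℝ Δp)
    (hvA : ∀ j, A j ∉ Δp) (hvB : ∀ j, B j ∉ Δp) (hvC : ∀ j, C j ∉ Δp)
    (x : ZMod k → R2) (hxΔ : ∀ j, x j ∈ Δp)
    (hx1 : ∀ j, x j ∈ convexHull ℝ ({A j, B j, C j} : Set R2))
    (hx2 : ∀ j, x j ∈ convexHull ℝ ({A (j+1), B (j+1), C (j+1)} : Set R2))
    (NONADJ : ∀ i j : ZMod k, j ≠ i - 1 → j ≠ i → j ≠ i + 1 → ∀ z, z ∈ Δp →
       z ∈ convexHull ℝ ({A i, B i, C i} : Set R2) →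
       z ∈ convexHull ℝ ({A j, B j, C j} : Set R2) → False)
    (TRIPLE : ∀ j : ZMod k, ∀ z, z ∈ Δp →
       z ∈ convexHull ℝ ({A (j-1), B (j-1), C (j-1)} : Set R2) →
       z ∈ convexHull ℝ ({A j, B j, C j} : Set R2) →
       z ∈ convexHull ℝ ({A (j+1), B (j+1), C (j+1)} : Set R2) → False) :
    ∃ (E1 E2 : ZMod k → R2) (v : ZMod k → R2),
      (∀ m, (E1 m = A m ∧ E2 m = B m) ∨ (E1 m = B m ∧ E2 m = C m) ∨
            (E1 m = C m ∧ E2 m = A m)) ∧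
      (∀ m, v m ∈ Δp ∧ v m ∈ segment ℝ (E1 m) (E2 m) ∧
            v m ∈ segment ℝ (E1 (m+1)) (E2 (m+1))) := by
  haveI : NeZero k := ⟨by omega⟩
  have hm1 : ∀ m : ZMod k, m - 1 + 1 = m := fun m => by ring
  have hm2 : ∀ m : ZMod k, m - 1 - 1 = m - 2 := fun m => by ring
  have hp11 : ∀ m : ZMod k, m + 1 - 1 = m := fun m => by ring
  -- entry construction
  have step1 : ∀ j : ZMod k, ∃ PQ : R2 × R2, ∃ p : R2,
      ((PQ.1 = A (j+1) ∧ PQ.2 = B (j+1)) ∨ (PQ.1 = B (j+1) ∧ PQ.2 = C (j+1)) ∨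
        (PQ.1 = C (j+1) ∧ PQ.2 = A (j+1))) ∧
      p ∈ segment ℝ (x (j-1)) (x j) ∧
      p ∈ convexHull ℝ ({A (j+1), B (j+1), C (j+1)} : Set R2) ∧
      ecross (A (j+1)) (B (j+1)) (C (j+1)) * ecross PQ.1 PQ.2 p = 0 ∧
      ecross (A (j+1)) (B (j+1)) (C (j+1)) * ecross PQ.1 PQ.2 (x (j-1)) < 0 := by
    intro j
    set d := ecross (A (j+1)) (B (j+1)) (C (j+1)) with hdj
    have hmem1 : x j ∈ convexHull ℝ ({A (j+1), B (j+1), C (j+1)} : Set R2) := hx2 j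
    have hin := (tri_mem_iff (hd (j+1)) (x j)).1 hmem1
    have hnotmem : x (j-1) ∉ convexHull ℝ ({A (j+1), B (j+1), C (j+1)} : Set R2) := by
      intro hcon
      have h1 : x (j-1) ∈ convexHull ℝ ({A (j-1), B (j-1), C (j-1)} : Set R2) := hx1 (j-1)
      have h2 : x (j-1) ∈ convexHull ℝ ({A j, B j, C j} : Set R2) := by
        have := hx2 (j-1); rwa [hm1] at this
      exact TRIPLE j (x (j-1)) (hxΔ (j-1)) h1 h2 hcon
    have hviol : d * ecross (B (j+1)) (C (j+1)) (x (j-1)) < 0 ∨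
        d * ecross (C (j+1)) (A (j+1)) (x (j-1)) < 0 ∨
        d * ecross (A (j+1)) (B (j+1)) (x (j-1)) < 0 := by
      by_contra hcon
      push_neg at hcon
      exact hnotmem ((tri_mem_iff (hd (j+1)) (x (j-1))).2
        ⟨hcon.1, hcon.2.1, hcon.2.2⟩)
    obtain ⟨p, hpseg, ⟨hp1, hp2, hp3⟩, htag⟩ :=
      entry (fun z => d * ecross (B (j+1)) (C (j+1)) z)
        (fun z => d * ecross (C (j+1)) (A (j+1)) z)
        (fun z => d * ecross (A (j+1)) (B (j+1)) z)
        (scaled_ecross_affine d _ _) (scaled_ecross_affine d _ _)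
        (scaled_ecross_affine d _ _) hviol ⟨hin.1, hin.2.1, hin.2.2⟩
    have hpmem : p ∈ convexHull ℝ ({A (j+1), B (j+1), C (j+1)} : Set R2) :=
      (tri_mem_iff (hd (j+1)) p).2 ⟨hp1, hp2, hp3⟩
    rcases htag with ⟨h0, hneg⟩ | ⟨h0, hneg⟩ | ⟨h0, hneg⟩
    · exact ⟨(B (j+1), C (j+1)), p, Or.inr (Or.inl ⟨rfl, rfl⟩), hpseg, hpmem, h0, hneg⟩
    · exact ⟨(C (j+1), A (j+1)), p, Or.inr (Or.inr ⟨rfl, rfl⟩), hpseg, hpmem, h0, hneg⟩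
    · exact ⟨(A (j+1), B (j+1)), p, Or.inl ⟨rfl, rfl⟩, hpseg, hpmem, h0, hneg⟩
  choose PQ pent hedge0 hpseg0 hpK0 hp00 hpneg0 using step1
  set E1 : ZMod k → R2 := fun m => (PQ (m-1)).1 with hE1
  set E2 : ZMod k → R2 := fun m => (PQ (m-1)).2 with hE2
  -- transported entry data, indexed by the triangle
  have hedge : ∀ m : ZMod k, (E1 m = A m ∧ E2 m = B m) ∨ (E1 m = B m ∧ E2 m = C m) ∨
      (E1 m = C m ∧ E2 m = A m) := by
    intro m
    have := hedge0 (m-1)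
    rw [hm1] at this
    exact this
  have hpseg : ∀ m : ZMod k, pent (m-1) ∈ segment ℝ (x (m-2)) (x (m-1)) := by
    intro m
    have := hpseg0 (m-1)
    rwa [hm2] at this
  have hpK : ∀ m : ZMod k, pent (m-1) ∈ convexHull ℝ ({A m, B m, C m} : Set R2) := by
    intro m
    have := hpK0 (m-1)
    rwa [hm1] at this
  have hp0 : ∀ m : ZMod k,
      ecross (A m) (B m) (C m) * ecross (E1 m) (E2 m) (pent (m-1)) = 0 := by
    intro m
    have := hp00 (m-1)
    rwa [hm1] at this
  have hpneg : ∀ m : ZMod k,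
      ecross (A m) (B m) (C m) * ecross (E1 m) (E2 m) (x (m-2)) < 0 := by
    intro m
    have := hpneg0 (m-1)
    rwa [hm1, hm2] at this
  -- the wall functional of triangle m
    -- φ m z := ecross (A m) (B m) (C m) * ecross (E1 m) (E2 m) z
  have haffφ : ∀ m : ZMod k, ∀ (a b : ℝ) (y z : R2), a + b = 1 →
      ecross (A m) (B m) (C m) * ecross (E1 m) (E2 m) (a • y + b • z) =
        a * (ecross (A m) (B m) (C m) * ecross (E1 m) (E2 m) y) +
        b * (ecross (A m) (B m) (C m) * ecross (E1 m) (E2 m) z) := by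
    intro m
    exact scaled_ecross_affine _ _ _
  have hKpos : ∀ m : ZMod k, ∀ z ∈ convexHull ℝ ({A m, B m, C m} : Set R2),
      0 ≤ ecross (A m) (B m) (C m) * ecross (E1 m) (E2 m) z := by
    intro m z hz
    have := (tri_mem_iff (hd m) z).1 hz
    rcases hedge m with ⟨h1, h2⟩ | ⟨h1, h2⟩ | ⟨h1, h2⟩ <;> rw [h1, h2]
    · exact this.2.2
    · exact this.1
    · exact this.2.1
  have hE1n : ∀ m : ZMod k, E1 m ∉ Δp := by
    intro m
    rcases hedge m with ⟨h1, _⟩ | ⟨h1, _⟩ | ⟨h1, _⟩ <;> rw [h1]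
    exacts [hvA m, hvB m, hvC m]
  have hE2n : ∀ m : ZMod k, E2 m ∉ Δp := by
    intro m
    rcases hedge m with ⟨_, h2⟩ | ⟨_, h2⟩ | ⟨_, h2⟩ <;> rw [h2]
    exacts [hvB m, hvC m, hvA m]
  have hE12 : ∀ m : ZMod k, E1 m ≠ E2 m := by
    intro m
    obtain ⟨nab, nbc, nca⟩ := vert_ne (hd m)
    rcases hedge m with ⟨h1, h2⟩ | ⟨h1, h2⟩ | ⟨h1, h2⟩ <;> rw [h1, h2]
    exacts [nab, nbc, nca]
  have hedgesub : ∀ m : ZMod k,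
      segment ℝ (E1 m) (E2 m) ⊆ convexHull ℝ ({A m, B m, C m} : Set R2) := by
    intro m
    rcases hedge m with ⟨h1, h2⟩ | ⟨h1, h2⟩ | ⟨h1, h2⟩ <;> rw [h1, h2]
    exacts [edge_sub_hull_AB _ _ _, edge_sub_hull_BC _ _ _, edge_sub_hull_CA _ _ _]
  have hpentΔ : ∀ m : ZMod k, pent (m-1) ∈ Δp := by
    intro m
    exact hconv.segment_subset (hxΔ (m-2)) (hxΔ (m-1)) (hpseg m)
  have hpent_edge : ∀ m : ZMod k, pent (m-1) ∈ segment ℝ (E1 m) (E2 m) := by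
    intro m
    have h0 : ecross (E1 m) (E2 m) (pent (m-1)) = 0 := by
      rcases mul_eq_zero.1 (hp0 m) with h | h
      · exact absurd h (hd m)
      · exact h
    rcases hedge m with ⟨h1, h2⟩ | ⟨h1, h2⟩ | ⟨h1, h2⟩ <;> rw [h1, h2]
    · exact tri_tight_AB (hd m) (hpK m) (by rw [h1, h2] at h0; exact h0)
    · exact tri_tight_BC (hd m) (hpK m) (by rw [h1, h2] at h0; exact h0)
    · exact tri_tight_CA (hd m) (hpK m) (by rw [h1, h2] at h0; exact h0)
  -- wall property
  have hwall : ∀ m : ZMod k, ∀ z ∈ Δp,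
      ecross (A m) (B m) (C m) * ecross (E1 m) (E2 m) z = 0 →
      z ∈ segment ℝ (E1 m) (E2 m) := by
    intro m z hzΔ h0
    have h0' : ecross (E1 m) (E2 m) z = 0 := by
      rcases mul_eq_zero.1 h0 with h | h
      · exact absurd h (hd m)
      · exact h
    exact wall hconv (hE12 m) h0' (hpent_edge m) hzΔ (hpentΔ m) (hE1n m) (hE2n m)
  -- pins by propagation around the cycle
  have pin : ∀ m : ZMod k, ∀ n : ℕ, n + 3 ≤ k →
      ecross (A m) (B m) (C m) * ecross (E1 m) (E2 m) (x (m - 2 - (n : ZMod k))) < 0 := by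
    intro m n
    induction n with
    | zero =>
      intro _
      simpa using hpneg m
    | succ n ih =>
      intro hn
      have ihv := ih (by omega)
      by_contra hcon
      push_neg at hcon
      -- a zero on the side from x (m-2-n) to x (m-2-n-1)
      set r := m - 2 - (n : ZMod k) with hr
      have hstep : (m - 2 - ((n+1 : ℕ) : ZMod k)) = r - 1 := by
        rw [hr]; push_cast; ring
      rw [hstep] at hcon
      obtain ⟨z, hzseg, hz0⟩ := segzero (fun z => ecross (A m) (B m) (C m) * ecross (E1 m) (E2 m) z) (haffφ m) (le_of_lt ihv) hcon
      have hzΔ : z ∈ Δp := hconv.segment_subset (hxΔ r) (hxΔ (r-1)) hzseg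
      have hzKm : z ∈ convexHull ℝ ({A m, B m, C m} : Set R2) :=
        hedgesub m (hwall m z hzΔ hz0)
      have hzKr : z ∈ convexHull ℝ ({A r, B r, C r} : Set R2) := by
        have hxr : x r ∈ convexHull ℝ ({A r, B r, C r} : Set R2) := hx1 r
        have hxr1 : x (r-1) ∈ convexHull ℝ ({A r, B r, C r} : Set R2) := by
          have := hx2 (r-1); rwa [hm1] at this
        exact (convex_convexHull ℝ _).segment_subset hxr hxr1 hzseg
      -- r is nonadjacent to m
      have hne1 : r ≠ m - 1 := by
        intro heq
        rw [hr] at heq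
        have h2 : ((n : ZMod k) + 1) = 0 := by linear_combination -heq
        have h3 : ((n + 1 : ℕ) : ZMod k) = ((0 : ℕ) : ZMod k) := by push_cast; linear_combination h2
        have := zmod_cast_inj (by omega) (by omega) h3
        omega
      have hne2 : r ≠ m := by
        intro heq
        rw [hr] at heq
        have h2 : ((n : ZMod k) + 2) = 0 := by linear_combination -heq
        have h3 : ((n + 2 : ℕ) : ZMod k) = ((0 : ℕ) : ZMod k) := by push_cast; linear_combination h2
        have := zmod_cast_inj (by omega) (by omega) h3
        omega
      have hne3 : r ≠ m + 1 := by
        intro heq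
        rw [hr] at heq
        have h2 : ((n : ZMod k) + 3) = 0 := by linear_combination -heq
        have h3 : ((n + 3 : ℕ) : ZMod k) = ((0 : ℕ) : ZMod k) := by push_cast; linear_combination h2
        have := zmod_cast_inj (by omega) (by omega) h3
        omega
      exact NONADJ m r hne1 hne2 hne3 z hzΔ hzKm hzKr
  have pinA : ∀ m : ZMod k,
      ecross (A m) (B m) (C m) * ecross (E1 m) (E2 m) (x (m + 1)) < 0 := by
    intro m
    have := pin m (k - 3) (by omega)
    have hidx : m - 2 - ((k - 3 : ℕ) : ZMod k) = m + 1 := by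
      have h1 : ((k - 3 : ℕ) : ZMod k) = ((k : ℕ) : ZMod k) - 3 := by
        rw [Nat.cast_sub (by omega)]
        norm_num
      rw [h1, ZMod.natCast_self]
      ring
    rwa [hidx] at this
  -- final construction for each pair
  have main : ∀ m : ZMod k, ∃ z, z ∈ Δp ∧ z ∈ segment ℝ (E1 m) (E2 m) ∧
      z ∈ segment ℝ (E1 (m+1)) (E2 (m+1)) := by
    intro m
    -- p' : zero of φ (m+1) on the far side [x (m+2), x (m+1)]
    have hfar : ecross (A (m+1)) (B (m+1)) (C (m+1)) *
        ecross (E1 (m+1)) (E2 (m+1)) (x ((m+1) + 1)) < 0 := pinA (m+1)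
    have hnear : 0 ≤ ecross (A (m+1)) (B (m+1)) (C (m+1)) *
        ecross (E1 (m+1)) (E2 (m+1)) (x (m+1)) := hKpos (m+1) _ (hx1 (m+1))
    obtain ⟨p', hp'seg, hp'0⟩ := segzero (fun z => ecross (A (m+1)) (B (m+1)) (C (m+1)) * ecross (E1 (m+1)) (E2 (m+1)) z) (haffφ (m+1)) (le_of_lt hfar) hnear
    rw [show m + 1 + 1 = m + 2 by ring] at hp'seg
    have hp'Δ : p' ∈ Δp := hconv.segment_subset (hxΔ (m+2)) (hxΔ (m+1)) hp'seg
    have hp'edge : p' ∈ segment ℝ (E1 (m+1)) (E2 (m+1)) := hwall (m+1) p' hp'Δ hp'0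
    -- the entry point of pair m : tight for triangle m+1
    have hqedge : pent m ∈ segment ℝ (E1 (m+1)) (E2 (m+1)) := by
      have := hpent_edge (m+1); rwa [hp11] at this
    have hq0 : ecross (A (m+1)) (B (m+1)) (C (m+1)) *
        ecross (E1 (m+1)) (E2 (m+1)) (pent m) = 0 := by
      have := hp0 (m+1); rwa [hp11] at this
    have hqΔ : pent m ∈ Δp := by
      have := hpentΔ (m+1); rwa [hp11] at this
    have hqKm : pent m ∈ convexHull ℝ ({A m, B m, C m} : Set R2) := by
      have := hpseg (m+1)
      rw [hp11, show m + 1 - 2 = m - 1 by ring] at this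
      have hxm1 : x (m-1) ∈ convexHull ℝ ({A m, B m, C m} : Set R2) := by
        have := hx2 (m-1); rwa [hm1] at this
      exact (convex_convexHull ℝ _).segment_subset hxm1 (hx1 m) this
    have hqpos : 0 ≤ ecross (A m) (B m) (C m) * ecross (E1 m) (E2 m) (pent m) :=
      hKpos m _ hqKm
    rcases le_or_gt (ecross (A m) (B m) (C m) * ecross (E1 m) (E2 m) p') 0 with hps | hps
    · -- common zero on [p', pent m]
      obtain ⟨z, hzseg, hz0⟩ := segzero (fun z => ecross (A m) (B m) (C m) * ecross (E1 m) (E2 m) z) (haffφ m) hps hqpos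
      have hzΔ : z ∈ Δp := hconv.segment_subset hp'Δ hqΔ hzseg
      have hz0' : ecross (A (m+1)) (B (m+1)) (C (m+1)) *
          ecross (E1 (m+1)) (E2 (m+1)) z = 0 :=
        segzero_of_ends (fun z => ecross (A (m+1)) (B (m+1)) (C (m+1)) * ecross (E1 (m+1)) (E2 (m+1)) z) (haffφ (m+1)) hp'0 hq0 hzseg
      exact ⟨z, hzΔ, hwall m z hzΔ hz0, hwall (m+1) z hzΔ hz0'⟩
    · -- impossible : produces a triple point
      exfalso
      have hxneg : ecross (A m) (B m) (C m) * ecross (E1 m) (E2 m) (x (m+1)) < 0 := pinA m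
      obtain ⟨w, hwseg, hw0⟩ := segzero (fun z => ecross (A m) (B m) (C m) * ecross (E1 m) (E2 m) z) (haffφ m) (le_of_lt hxneg) (le_of_lt hps)
      have hwΔ : w ∈ Δp := hconv.segment_subset (hxΔ (m+1)) hp'Δ hwseg
      have hwKm : w ∈ convexHull ℝ ({A m, B m, C m} : Set R2) :=
        hedgesub m (hwall m w hwΔ hw0)
      have hp'K1 : p' ∈ convexHull ℝ ({A (m+1), B (m+1), C (m+1)} : Set R2) :=
        hedgesub (m+1) hp'edge
      have hwK1 : w ∈ convexHull ℝ ({A (m+1), B (m+1), C (m+1)} : Set R2) :=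
        (convex_convexHull ℝ _).segment_subset (hx1 (m+1)) hp'K1 hwseg
      have hp'K2 : p' ∈ convexHull ℝ ({A (m+2), B (m+2), C (m+2)} : Set R2) := by
        have hx2' : x (m+2) ∈ convexHull ℝ ({A (m+2), B (m+2), C (m+2)} : Set R2) :=
          hx1 (m+2)
        have hx1' : x (m+1) ∈ convexHull ℝ ({A (m+2), B (m+2), C (m+2)} : Set R2) := by
          have := hx2 (m+1)
          rwa [show m + 1 + 1 = m + 2 by ring] at this
        exact (convex_convexHull ℝ _).segment_subset hx2' hx1' hp'seg
      have hwK2 : w ∈ convexHull ℝ ({A (m+2), B (m+2), C (m+2)} : Set R2) := by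
        have hx1' : x (m+1) ∈ convexHull ℝ ({A (m+2), B (m+2), C (m+2)} : Set R2) := by
          have := hx2 (m+1)
          rwa [show m + 1 + 1 = m + 2 by ring] at this
        exact (convex_convexHull ℝ _).segment_subset hx1' hp'K2 hwseg
      have hKm' : w ∈ convexHull ℝ ({A ((m+1)-1), B ((m+1)-1), C ((m+1)-1)} : Set R2) := by
        rwa [hp11]
      have hKp' : w ∈ convexHull ℝ ({A ((m+1)+1), B ((m+1)+1), C ((m+1)+1)} : Set R2) := by
        rwa [show m + 1 + 1 = m + 2 by ring]
      exact TRIPLE (m+1) w hwΔ hKm' hwK1 hKp'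
  choose v hv using main
  exact ⟨E1, E2, v, hedge, hv⟩

end S1Aux

namespace S1Aux

def vprojL : R3 →ₗ[ℝ] R2 where
  toFun := vproj
  map_add' := by intro a b; simp [vproj, Prod.ext_iff]
  map_smul' := by intro c a; simp [vproj, Prod.ext_iff]

lemma vproj_hull_mem {t : R3 × R3 × R3} {z : R2} :
    z ∈ convexHull ℝ ({vproj t.1, vproj t.2.1, vproj t.2.2} : Set R2) ↔
      ∃ w ∈ triOf t, vproj w = z := by
  have himg : vproj '' (triOf t) =
      convexHull ℝ ({vproj t.1, vproj t.2.1, vproj t.2.2} : Set R2) := by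
    have h1 := vprojL.image_convexHull ({t.1, t.2.1, t.2.2} : Set R3)
    have h0 : ⇑vprojL = vproj := rfl
    rw [h0] at h1
    rw [triOf, h1, Set.image_insert_eq, Set.image_insert_eq, Set.image_singleton]
  rw [← himg]
  constructor
  · rintro ⟨w, hw, rfl⟩; exact ⟨w, hw, rfl⟩
  · rintro ⟨w, hw, h⟩; exact ⟨w, hw, h⟩

end S1Aux

/-- claim in the proof of Proposition 1. A minimal cycle among the
triangle pieces in a vertical column admits a witness curve all of whose links are
good: consecutive points `a_i, b_i` on `P_i` lie on a common piece `e ∩ C_Δ` of an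
edge `e` of the triangle whose piece is `P_i`. -/
theorem stmt_1
    (T : Finset (R3 × R3 × R3))
    (hTri : ∀ t ∈ T, IsTriangleVerts t)
    (hNV : ∀ t ∈ T, NonVertical (triOf t))
    (hDisj : ∀ t ∈ T, ∀ t' ∈ T, t ≠ t' → Disjoint (triOf t) (triOf t'))
    (Δ : Set R2) (hΔne : Δ.Nonempty) (hΔopen : IsOpen Δ) (hΔconv : Convex ℝ Δ)
    (hvert : ∀ t ∈ T, ∀ v ∈ vertsOf t, vproj v ∉ Δ)
    (C : Set R3) (hC : C = {p : R3 | vproj p ∈ Δ})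
    (TΔ : Set (Set R3))
    (hTΔ : TΔ = {S | ∃ t ∈ T, (triOf t ∩ C).Nonempty ∧ S = triOf t ∩ C})
    (k : ℕ) (hk : 3 ≤ k)
    (P : ZMod k → Set R3) (hPinj : Function.Injective P)
    (hPmem : ∀ i, P i ∈ TΔ)
    (hPcyc : ∀ i, Below (P i) (P (i + 1)))
    (hmin : ∀ W : Set (Set R3), W.Nonempty → W ⊂ Set.range P → ¬ BelowCycle W) :
    ∃ a b : ZMod k → R3,
      (∀ i, a i ∈ P i ∧ b i ∈ P i) ∧
      (∀ i, vproj (b i) = vproj (a (i + 1)) ∧ zcoord (b i) < zcoord (a (i + 1))) ∧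
      (∀ i, ∃ t ∈ T, P i = triOf t ∩ C ∧ ∃ e ∈ edgesOf t, a i ∈ e ∩ C ∧ b i ∈ e ∩ C) := by
  classical
  haveI : NeZero k := ⟨by omega⟩
  -- choose the triangles of the pieces
  have hPm : ∀ i : ZMod k, ∃ t, t ∈ T ∧ (triOf t ∩ C).Nonempty ∧ P i = triOf t ∩ C := by
    intro i
    have := hPmem i
    rw [hTΔ] at this
    obtain ⟨t, ht, hne, heq⟩ := this
    exact ⟨t, ht, hne, heq⟩
  choose tt httT _httne hPt using hPm
  have hCmem : ∀ p : R3, p ∈ C ↔ vproj p ∈ Δ := by intro p; rw [hC]; exact Iff.rfl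
  have h10 : (1 : ZMod k) ≠ 0 := by
    intro h
    have h' : ((1 : ℕ) : ZMod k) = ((0 : ℕ) : ZMod k) := by push_cast; exact h
    have := S1Aux.zmod_cast_inj (by omega) (by omega) h'
    omega
  have httne' : ∀ i j : ZMod k, i ≠ j → tt i ≠ tt j := by
    intro i j hij heq
    apply hPinj.ne hij
    rw [hPt i, hPt j, heq]
  have hdisj : ∀ i j : ZMod k, i ≠ j → Disjoint (triOf (tt i)) (triOf (tt j)) :=
    fun i j hij => hDisj _ (httT i) _ (httT j) (httne' i j hij)
  have hconvT : ∀ i : ZMod k, Convex ℝ (triOf (tt i)) := fun i => convex_convexHull ℝ _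
  have hNB : ∀ i j : ZMod k, j ≠ i + 1 → ¬ Below (P i) (P j) :=
    fun i j hij hb => S1Aux.nobelow hk P hPinj hPcyc hmin hij hb
  -- witnesses of the cyclic below relations
  have hwit : ∀ i : ZMod k, ∃ p q : R3, p ∈ triOf (tt i) ∧ q ∈ triOf (tt (i+1)) ∧
      vproj p = vproj q ∧ vproj p ∈ Δ ∧ zcoord p < zcoord q := by
    intro i
    obtain ⟨p, hp, q, hq, hpq, hz⟩ := hPcyc i
    rw [hPt i] at hp
    rw [hPt (i+1)] at hq
    refine ⟨p, q, hp.1, hq.1, hpq, ?_, hz⟩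
    have := hp.2
    rw [hC] at this
    exact this
  choose wp wq hwp hwq hwpq hwΔ hwz using hwit
  -- global consecutive height comparison
  have hL4 : ∀ i : ZMod k, ∀ p ∈ triOf (tt i), ∀ q ∈ triOf (tt (i+1)),
      vproj p = vproj q → zcoord p < zcoord q := by
    intro i p hp q hq hpq
    have hne : i ≠ i + 1 := by
      intro h
      apply h10
      linear_combination -h
    exact S1Aux.no_double_cross (hconvT i) (hconvT (i+1)) (hdisj i (i+1) hne)
      (hwp i) hp (hwq i) hq (hwpq i) hpq (hwz i)
  -- planar data
  set pA : ZMod k → R2 := fun i => vproj (tt i).1 with hpA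
  set pB : ZMod k → R2 := fun i => vproj (tt i).2.1 with hpB
  set pC : ZMod k → R2 := fun i => vproj (tt i).2.2 with hpC
  have hd : ∀ i : ZMod k, S1Aux.ecross (pA i) (pB i) (pC i) ≠ 0 := fun i =>
    S1Aux.proj_nondeg (hTri _ (httT i)) (hNV _ (httT i))
  have hhull : ∀ i : ZMod k, ∀ z : R2,
      z ∈ convexHull ℝ ({pA i, pB i, pC i} : Set R2) ↔
        ∃ w ∈ triOf (tt i), vproj w = z := fun i z => S1Aux.vproj_hull_mem
  have hvA : ∀ i : ZMod k, pA i ∉ Δ := fun i =>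
    hvert _ (httT i) _ (by simp [vertsOf])
  have hvB : ∀ i : ZMod k, pB i ∉ Δ := fun i =>
    hvert _ (httT i) _ (by simp [vertsOf])
  have hvC : ∀ i : ZMod k, pC i ∉ Δ := fun i =>
    hvert _ (httT i) _ (by simp [vertsOf])
  set x : ZMod k → R2 := fun i => vproj (wp i) with hx
  have hxΔ : ∀ i : ZMod k, x i ∈ Δ := fun i => hwΔ i
  have hx1 : ∀ i : ZMod k, x i ∈ convexHull ℝ ({pA i, pB i, pC i} : Set R2) := by
    intro i
    exact (hhull i (x i)).2 ⟨wp i, hwp i, rfl⟩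
  have hx2 : ∀ i : ZMod k, x i ∈ convexHull ℝ ({pA (i+1), pB (i+1), pC (i+1)} : Set R2) := by
    intro i
    exact (hhull (i+1) (x i)).2 ⟨wq i, hwq i, (hwpq i).symm⟩
  -- planar nonadjacent emptiness
  have NONADJ : ∀ i j : ZMod k, j ≠ i - 1 → j ≠ i → j ≠ i + 1 → ∀ z, z ∈ Δ →
      z ∈ convexHull ℝ ({pA i, pB i, pC i} : Set R2) →
      z ∈ convexHull ℝ ({pA j, pB j, pC j} : Set R2) → False := by
    intro i j hne1 hne2 hne3 z hzΔ hzi hzj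
    obtain ⟨p3, hp3, hp3z⟩ := (hhull i z).1 hzi
    obtain ⟨q3, hq3, hq3z⟩ := (hhull j z).1 hzj
    have hpq : vproj p3 = vproj q3 := by rw [hp3z, hq3z]
    have hp3C : p3 ∈ C := (hCmem p3).2 (by rw [hp3z]; exact hzΔ)
    have hq3C : q3 ∈ C := (hCmem q3).2 (by rw [hq3z]; exact hzΔ)
    rcases lt_trichotomy (zcoord p3) (zcoord q3) with hlt | heq | hgt
    · exact hNB i j hne3 ⟨p3, by rw [hPt i]; exact ⟨hp3, hp3C⟩,
        q3, by rw [hPt j]; exact ⟨hq3, hq3C⟩, hpq, hlt⟩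
    · have : p3 = q3 := S1Aux.pt_ext hpq heq
      have hij : i ≠ j := fun h => hne2 h.symm
      exact Set.disjoint_left.1 (hdisj i j hij) hp3 (this ▸ hq3)
    · refine hNB j i ?_ ⟨q3, by rw [hPt j]; exact ⟨hq3, hq3C⟩,
        p3, by rw [hPt i]; exact ⟨hp3, hp3C⟩, hpq.symm, hgt⟩
      intro h
      apply hne1
      rw [h]; ring
  -- planar triple emptiness
  have TRIPLE : ∀ j : ZMod k, ∀ z, z ∈ Δ →
      z ∈ convexHull ℝ ({pA (j-1), pB (j-1), pC (j-1)} : Set R2) →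
      z ∈ convexHull ℝ ({pA j, pB j, pC j} : Set R2) →
      z ∈ convexHull ℝ ({pA (j+1), pB (j+1), pC (j+1)} : Set R2) → False := by
    intro j z hzΔ hzm hz0 hzp
    obtain ⟨pm, hpm, hpmz⟩ := (hhull (j-1) z).1 hzm
    obtain ⟨p0, hp0, hp0z⟩ := (hhull j z).1 hz0
    obtain ⟨pp, hpp, hppz⟩ := (hhull (j+1) z).1 hzp
    have h1 : zcoord pm < zcoord p0 := by
      have hmem : p0 ∈ triOf (tt ((j-1) + 1)) := by
        rw [show j - 1 + 1 = j by ring]; exact hp0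
      exact hL4 (j-1) pm hpm p0 hmem (by rw [hpmz, hp0z])
    have h2 : zcoord p0 < zcoord pp := hL4 j p0 hp0 pp hpp (by rw [hp0z, hppz])
    by_cases hkk : (j + 1) + 1 = j - 1
    · have hmem : pm ∈ triOf (tt ((j+1) + 1)) := by rw [hkk]; exact hpm
      have h3 : zcoord pp < zcoord pm := hL4 (j+1) pp hpp pm hmem (by rw [hppz, hpmz])
      linarith
    · refine NONADJ (j-1) (j+1) ?_ ?_ ?_ z hzΔ hzm hzp
      · intro heq
        apply hkk
        linear_combination heq
      · intro heq
        apply h10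
        have h2' : ((2 : ℕ) : ZMod k) = ((0 : ℕ) : ZMod k) := by
          push_cast
          linear_combination heq
        have := S1Aux.zmod_cast_inj (by omega) (by omega) h2'
        omega
      · intro heq
        apply h10
        have h1' : ((1 : ℕ) : ZMod k) = ((0 : ℕ) : ZMod k) := by
          push_cast
          linear_combination heq
        have := S1Aux.zmod_cast_inj (by omega) (by omega) h1'
        omega
  -- run the planar core
  obtain ⟨E1, E2, v, hedge, hv⟩ := S1Aux.core hk pA pB pC hd Δ hΔconv hvA hvB hvC
    x hxΔ hx1 hx2 NONADJ TRIPLE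
  -- lift the chosen planar edges to 3D edges
  have hlift : ∀ m : ZMod k, ∃ (e : Set R3) (F1 F2 : R3), e ∈ edgesOf (tt m) ∧
      e = segment ℝ F1 F2 ∧ vproj F1 = E1 m ∧ vproj F2 = E2 m := by
    intro m
    rcases hedge m with ⟨h1, h2⟩ | ⟨h1, h2⟩ | ⟨h1, h2⟩
    · exact ⟨segment ℝ (tt m).1 (tt m).2.1, (tt m).1, (tt m).2.1,
        by simp [edgesOf], rfl, h1.symm, h2.symm⟩
    · exact ⟨segment ℝ (tt m).2.1 (tt m).2.2, (tt m).2.1, (tt m).2.2,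
        by simp [edgesOf], rfl, h1.symm, h2.symm⟩
    · exact ⟨segment ℝ (tt m).1 (tt m).2.2, (tt m).2.2, (tt m).1,
        by simp [edgesOf], segment_symm ℝ _ _, h1.symm, h2.symm⟩
  choose e3 F1 F2 hemem heseg hF1 hF2 using hlift
  have hesub : ∀ m : ZMod k, segment ℝ (F1 m) (F2 m) ⊆ triOf (tt m) := by
    intro m
    rw [← heseg m]
    rcases hemem m with h | h | h <;> rw [h]
    · exact (convex_convexHull ℝ _).segment_subset
        (subset_convexHull ℝ _ (by simp)) (subset_convexHull ℝ _ (by simp))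
    · exact (convex_convexHull ℝ _).segment_subset
        (subset_convexHull ℝ _ (by simp)) (subset_convexHull ℝ _ (by simp))
    · exact (convex_convexHull ℝ _).segment_subset
        (subset_convexHull ℝ _ (by simp)) (subset_convexHull ℝ _ (by simp))
  have hliftpt : ∀ m : ZMod k, ∀ z : R2, z ∈ segment ℝ (E1 m) (E2 m) →
      ∃ w ∈ segment ℝ (F1 m) (F2 m), vproj w = z := by
    intro m z hz
    obtain ⟨a', b', ha', hb', hab', hz'⟩ := hz
    refine ⟨a' • F1 m + b' • F2 m, ⟨a', b', ha', hb', hab', rfl⟩, ?_⟩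
    rw [S1Aux.vproj_combo, hF1, hF2, hz']
  have haex : ∀ m : ZMod k, ∃ w ∈ segment ℝ (F1 m) (F2 m), vproj w = v (m-1) := by
    intro m
    apply hliftpt
    have := (hv (m-1)).2.2
    rwa [show m - 1 + 1 = m by ring] at this
  choose a haseg havp using haex
  have hbex : ∀ m : ZMod k, ∃ w ∈ segment ℝ (F1 m) (F2 m), vproj w = v m := by
    intro m
    exact hliftpt m (v m) (hv m).2.1
  choose b hbseg hbvp using hbex
  have haC : ∀ m : ZMod k, a m ∈ C := by
    intro m
    rw [hCmem, havp m]
    exact (hv (m-1)).1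
  have hbC : ∀ m : ZMod k, b m ∈ C := by
    intro m
    rw [hCmem, hbvp m]
    exact (hv m).1
  have haT : ∀ m : ZMod k, a m ∈ triOf (tt m) := fun m => hesub m (haseg m)
  have hbT : ∀ m : ZMod k, b m ∈ triOf (tt m) := fun m => hesub m (hbseg m)
  refine ⟨a, b, ?_, ?_, ?_⟩
  · intro m
    constructor
    · rw [hPt m]; exact ⟨haT m, haC m⟩
    · rw [hPt m]; exact ⟨hbT m, hbC m⟩
  · intro m
    have hproj : vproj (b m) = vproj (a (m+1)) := by
      rw [hbvp m, havp (m+1), show m + 1 - 1 = m by ring]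
    refine ⟨hproj, ?_⟩
    exact hL4 m (b m) (hbT m) (a (m+1)) (haT (m+1)) hproj
  · intro m
    refine ⟨tt m, httT m, hPt m, e3 m, hemem m, ?_, ?_⟩
    · rw [heseg m]
      exact ⟨haseg m, haC m⟩
    · rw [heseg m]
      exact ⟨hbseg m, hbC m⟩
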